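/- For p ≥ 1, q ≥ 1 odd, and 0 ≤ i ≤ p-1, the binomial coefficient C(2^p·q + 2^p - 2^i - 1, 2^(p+1) - 2^(i+1) - 1) is even. -/

import Mathlib

private lemma stmt7_div_helper (i m : ℕ) (hm : 1 ≤ m) : (2 ^ i * m - 1) / 2 ^ i = m - 1 := by
  obtain ⟨m', rfl⟩ := Nat.exists_eq_add_of_le hm
  have h2 : 0 < 2 ^ i := Nat.pow_pos (by norm_num)
  have h : 2 ^ i * (1 + m') - 1 = 2 ^ i * m' + (2 ^ i - 1) := by
    rw [Nat.mul_add, Nat.mul_one]; omega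
  rw [h, Nat.mul_add_div h2, Nat.div_eq_of_lt (by omega)]
  omega

theorem stmt7 (p q i : ℕ) (hp : 1 ≤ p) (hq : Odd q) (hq1 : 1 ≤ q) (hi : i ≤ p - 1) :
    Even (Nat.choose (2 ^ p * q + 2 ^ p - 2 ^ i - 1) (2 ^ (p + 1) - 2 ^ (i + 1) - 1)) := by
  haveI : Fact (Nat.Prime 2) := ⟨Nat.prime_two⟩
  have hip : i + 1 ≤ p := by omega
  set a := 2 ^ (p - i - 1) with ha
  have ha1 : 1 ≤ a := Nat.one_le_two_pow
  have h2i : 0 < 2 ^ i := Nat.pow_pos (by norm_num)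
  have hpa : 2 ^ p = 2 ^ i * (2 * a) := by
    rw [ha, ← pow_succ', ← pow_add]
    congr 1
    omega
  have hpa1 : 2 ^ (p + 1) = 2 ^ i * (4 * a) := by
    rw [pow_succ, hpa]; ring
  have hia1 : 2 ^ (i + 1) = 2 ^ i * 2 := by rw [pow_succ]
  set n := 2 ^ p * q + 2 ^ p - 2 ^ i - 1 with hn
  set k := 2 ^ (p + 1) - 2 ^ (i + 1) - 1 with hk
  have hn' : n = 2 ^ i * (2 * a * q + 2 * a - 1) - 1 := by
    rw [hn, hpa, Nat.mul_sub, Nat.mul_add]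
    have h1 : 2 ^ i * (2 * a * q) = 2 ^ i * (2 * a) * q := by ring
    have h2 : 2 ^ i ≤ 2 ^ i * (2 * a) := Nat.le_mul_of_pos_right _ (by omega)
    rw [h1, Nat.mul_one]
  have hk' : k = 2 ^ i * (4 * a - 2) - 1 := by
    rw [hk, hpa1, hia1, Nat.mul_sub]
  have hnd : n / 2 ^ i % 2 = 0 := by
    obtain ⟨t, ht⟩ : ∃ t, a * q = t := ⟨_, rfl⟩
    have ht1 : 1 ≤ t := ht ▸ Nat.one_le_iff_ne_zero.mpr (Nat.mul_ne_zero (by omega) (by omega))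
    have h4 : 2 * a * q = 2 * t := by rw [← ht]; ring
    rw [hn', h4, stmt7_div_helper _ _ (by omega)]
    omega
  have hkd : k / 2 ^ i % 2 = 1 := by
    rw [hk', stmt7_div_helper _ _ (by omega)]
    omega
  have hlucas := Choose.choose_modEq_choose_mul_prod_range_choose
    (p := 2) (n := n) (k := k) (i + 1)
  have hprod : ∏ j ∈ Finset.range (i + 1), Nat.choose (n / 2 ^ j % 2) (k / 2 ^ j % 2) = 0 := by
    apply Finset.prod_eq_zero (Finset.self_mem_range_succ i)
    rw [hnd, hkd]
    simp
  rw [hprod] at hlucas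
  have h0 : (Nat.choose n k : ℤ) ≡ 0 [ZMOD 2] := by simpa using hlucas
  have hdvd : (2 : ℤ) ∣ (Nat.choose n k : ℤ) := Int.modEq_zero_iff_dvd.mp h0
  have hdvd' : 2 ∣ Nat.choose n k := by exact_mod_cast hdvd
  exact (even_iff_two_dvd).mpr hdvd'
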